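/- If X is a T1 topological space with at least two points and κ is an uncountable cardinal, then the power X^κ (with the product topology) is OHD. -/
import Mathlib


open Filter Topology Set

/-- `x : ℕ → X` has no convergent subsequence. -/
def NoConvSubseq {X : Type*} [TopologicalSpace X] (x : ℕ → X) : Prop :=
  ∀ φ : ℕ → ℕ, StrictMono φ → ∀ y : X, ¬ Filter.Tendsto (x ∘ φ) Filter.atTop (nhds y)

/-- Selectively highly divergent. -/
def SHD (X : Type*) [TopologicalSpace X] : Prop :=
  ∀ U : ℕ → Set X, (∀ n, IsOpen (U n)) → (∀ n, (U n).Nonempty) →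
    ∃ x : ℕ → X, (∀ n, x n ∈ U n) ∧ NoConvSubseq x

/-- Weakly selectively highly divergent. -/
def WSHD (X : Type*) [TopologicalSpace X] : Prop :=
  ∀ U : ℕ → Set X, (∀ n, IsOpen (U n)) → (∀ n, (U n).Nonempty) →
    ∃ A : Set ℕ, A.Infinite ∧ ∃ x : ℕ → X, (∀ n ∈ A, x n ∈ U n) ∧
      ∀ φ : ℕ → ℕ, StrictMono φ → (∀ n, φ n ∈ A) →
        ∀ y : X, ¬ Filter.Tendsto (x ∘ φ) Filter.atTop (nhds y)

/-- A sequence of nonempty open sets converges to a point. -/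
def OpenSeqTendsto {X : Type*} [TopologicalSpace X] (U : ℕ → Set X) (x : X) : Prop :=
  ∀ V : Set X, IsOpen V → x ∈ V → ∃ m : ℕ, ∀ n ≥ m, U n ⊆ V

/-- Openly highly divergent: no sequence of nonempty open sets converges to a point. -/
def OHD (X : Type*) [TopologicalSpace X] : Prop :=
  ¬ ∃ (U : ℕ → Set X) (x : X),
      (∀ n, IsOpen (U n)) ∧ (∀ n, (U n).Nonempty) ∧ OpenSeqTendsto U x

/-- `x` has a countable local (neighbourhood) base. -/
def HasCountableLocalBase {X : Type*} [TopologicalSpace X] (x : X) : Prop :=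
  ∃ B : Set (Set X), B.Countable ∧ (∀ V ∈ B, IsOpen V ∧ x ∈ V) ∧
    ∀ U : Set X, IsOpen U → x ∈ U → ∃ V ∈ B, V ⊆ U

/-- `x` has a countable local π-base. -/
def HasCountableLocalPiBase {X : Type*} [TopologicalSpace X] (x : X) : Prop :=
  ∃ B : Set (Set X), B.Countable ∧ (∀ V ∈ B, IsOpen V ∧ V.Nonempty) ∧
    ∀ U : Set X, IsOpen U → x ∈ U → ∃ V ∈ B, V ⊆ U

/-- UC: every point has uncountable character. -/
def UC (X : Type*) [TopologicalSpace X] : Prop := ∀ x : X, ¬ HasCountableLocalBase x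

/-- π-UC: every point has uncountable π-character. -/
def PiUC (X : Type*) [TopologicalSpace X] : Prop := ∀ x : X, ¬ HasCountableLocalPiBase x

/-- Sequentially discrete: every convergent sequence is eventually constant. -/
def SD (X : Type*) [TopologicalSpace X] : Prop :=
  ∀ (x : ℕ → X) (y : X), Filter.Tendsto x Filter.atTop (nhds y) →
    ∃ m : ℕ, ∀ n ≥ m, x n = x m

/-- The Pixley–Roy hyperspace: nonempty finite subsets of `X`. -/
def PR (X : Type*) : Type _ := {F : Set X // F.Finite ∧ F.Nonempty}

/-- The basic sets `[F, U]` of the Pixley–Roy topology. -/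
def PRBasic {X : Type*} (F U : Set X) : Set (PR X) :=
  {G : PR X | F ⊆ G.1 ∧ G.1 ⊆ U}

instance PR.instTopologicalSpace {X : Type*} [TopologicalSpace X] :
    TopologicalSpace (PR X) :=
  TopologicalSpace.generateFrom
    {S | ∃ (F : PR X) (U : Set X), IsOpen U ∧ S = PRBasic F.1 U}

/-- P-space: countable intersections of open sets are open. -/
def PSpace (X : Type*) [TopologicalSpace X] : Prop :=
  ∀ U : ℕ → Set X, (∀ n, IsOpen (U n)) → IsOpen (⋂ n, U n)

/-- `Σ(Y, p, κ)`: points of `Y^κ` differing from the constant `p` on countably many coordinates. -/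
def SigmaProd (Y : Type*) (p : Y) (κ : Type*) : Set (κ → Y) :=
  {x | {α : κ | x α ≠ p}.Countable}

/-- `σ(Y, p, κ)`: points of `Y^κ` differing from the constant `p` on finitely many coordinates. -/
def SmallSigmaProd (Y : Type*) (p : Y) (κ : Type*) : Set (κ → Y) :=
  {x | {α : κ | x α ≠ p}.Finite}

theorem statement8 {X : Type*} [TopologicalSpace X] [T1Space X] [Nontrivial X]
    {κ : Type*} [Uncountable κ] : OHD (κ → X) := by
  classical
  rintro ⟨U, x, hUo, hUne, hconv⟩
  choose z hz using hUne
  have h : ∀ n, ∃ (I : Finset κ) (u : κ → Set X),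
      (∀ a ∈ I, IsOpen (u a) ∧ z n a ∈ u a) ∧ (I : Set κ).pi u ⊆ U n :=
    fun n => isOpen_pi_iff.mp (hUo n) (z n) (hz n)
  choose I u hIu hsub using h
  have hcount : (⋃ n, (I n : Set κ)).Countable :=
    Set.countable_iUnion fun n => (I n).countable_toSet
  obtain ⟨α, hα⟩ : ∃ α, α ∉ ⋃ n, (I n : Set κ) := by
    by_contra h
    push_neg at h
    have : (Set.univ : Set κ).Countable := by
      have : (⋃ n, (I n : Set κ)) = Set.univ := Set.eq_univ_of_forall h
      rwa [this] at hcount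
    exact not_countable (Set.countable_univ_iff.mp this)
  obtain ⟨b, hb⟩ := exists_ne (x α)
  have hV : IsOpen {y : κ → X | y α ≠ b} :=
    isOpen_compl_singleton.preimage (continuous_apply α)
  have hx : x ∈ {y : κ → X | y α ≠ b} := Ne.symm hb
  obtain ⟨m, hm⟩ := hconv _ hV hx
  have hw : Function.update (z m) α b ∈ U m := by
    apply hsub m
    intro a ha
    have hne : a ≠ α := fun h => hα (Set.mem_iUnion.mpr ⟨m, h ▸ ha⟩)
    rw [Function.update_of_ne hne]
    exact (hIu m a ha).2
  have := hm m le_rfl hw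
  simp [Function.update_self] at this
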